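/- arXiv:2006.00558 — 7 statements merged into one kernel-verified Lean document; each statement's English description precedes it below -/
import Mathlib

section
/- For any Frank-Wolfe-type method applied to minimizing f(x) = (1/2)‖x‖² over the down-closed unit simplex S↓_d, initialized at a standard basis vector: if at the current iterate x_t the number of nonzero entries of x_t is strictly less than d, then there exists a standard basis vector e_j with x_t(j) = 0 that minimizes v ↦ vᵀ∇f(x_t) over the vertex set of S↓_d. Consequently, for the adversarial oracle choice, all iterates x₁,…,x_d lie in conv{e₁,…,e_d}, so f(x_t) − f* ≥ 1/(2d) for all t ≤ d. -/
open scoped RealInnerProductSpace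

/-- For `f x = ½‖x‖²` over the down-closed unit simplex (whose
vertex set is `{0, e₁, …, e_d}`, and `∇f(x) = x`): if the current iterate
`x` (which is nonnegative) has fewer than `d` nonzero entries, then there is a
standard basis vector `e_j` with `x j = 0` minimizing `v ↦ ⟪v, ∇f(x)⟫` over the
vertex set.  Consequently every point in `conv{e₁,…,e_d}` has
`f x − f* ≥ 1/(2d)` (with `f* = 0`). -/
theorem stmt2 (d : ℕ)
    (V : Set (EuclideanSpace ℝ (Fin d)))
    (hV : V = insert (0 : EuclideanSpace ℝ (Fin d))
      (Set.range fun i : Fin d => EuclideanSpace.single i (1 : ℝ)))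
    (f : EuclideanSpace ℝ (Fin d) → ℝ)
    (hf : ∀ x, f x = (1 / 2) * ‖x‖ ^ 2) :
    (∀ x : EuclideanSpace ℝ (Fin d), (∀ i, 0 ≤ x i) →
      {i | x i ≠ 0} ≠ Set.univ →
      ∃ j : Fin d, x j = 0 ∧
        EuclideanSpace.single j (1 : ℝ) ∈ V ∧
        ∀ v ∈ V, ⟪EuclideanSpace.single j (1 : ℝ), x⟫ ≤ ⟪v, x⟫) ∧
    (∀ x ∈ convexHull ℝ
        (Set.range fun i : Fin d => EuclideanSpace.single i (1 : ℝ)),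
      1 / (2 * (d : ℝ)) ≤ f x - 0) := by
  constructor
  · intro x hx hne
    have : ∃ j, x j = 0 := by
      by_contra h
      push_neg at h
      exact hne (Set.eq_univ_iff_forall.2 fun i => h i)
    obtain ⟨j, hj⟩ := this
    refine ⟨j, hj, by simp [hV], ?_⟩
    intro v hv
    have hl : ⟪EuclideanSpace.single j (1 : ℝ), x⟫ = 0 := by
      simp [EuclideanSpace.inner_single_left, hj]
    rw [hl, hV] at *
    rcases hv with h0 | ⟨i, rfl⟩
    · simp [h0]
    · simp [EuclideanSpace.inner_single_left, hx i]
  · intro x hx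
    set C : Set (EuclideanSpace ℝ (Fin d)) :=
      {y | (∀ i, 0 ≤ y i) ∧ ∑ i, y i = 1} with hC
    have hconv : Convex ℝ C := by
      intro y hy z hz a b ha hb hab
      constructor
      · intro i
        have : (a • y + b • z) i = a * y i + b * z i := rfl
        rw [this]
        exact add_nonneg (mul_nonneg ha (hy.1 i)) (mul_nonneg hb (hz.1 i))
      · have : ∀ i, (a • y + b • z) i = a * y i + b * z i := fun i => rfl
        simp only [this, Finset.sum_add_distrib, ← Finset.mul_sum, hy.2, hz.2]
        linarith
    have hsub : Set.range (fun i : Fin d => EuclideanSpace.single i (1 : ℝ)) ⊆ C := by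
      rintro _ ⟨i, rfl⟩
      constructor
      · intro k
        simp [EuclideanSpace.single_apply]
        positivity
      · simp [EuclideanSpace.single_apply]
    have hxC : x ∈ C := convexHull_min hsub hconv hx
    obtain ⟨hpos, hsum⟩ := hxC
    have hd : 0 < d := by
      rcases Nat.eq_zero_or_pos d with h | h
      · subst h; simp at hsum
      · exact h
    have key : (1 : ℝ) ≤ (d : ℝ) * ∑ i, x i ^ 2 := by
      have := sq_sum_le_card_mul_sum_sq (s := Finset.univ) (f := fun i : Fin d => x i)
      simpa [hsum] using this
    have hnorm : ‖x‖ ^ 2 = ∑ i, x i ^ 2 := by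
      rw [EuclideanSpace.norm_eq]
      rw [Real.sq_sqrt (by positivity)]
      exact Finset.sum_congr rfl fun i _ => by rw [Real.norm_eq_abs, sq_abs]
    rw [hf, hnorm, sub_zero]
    rw [div_le_iff₀ (by positivity)]
    have hd' : (0 : ℝ) < d := by exact_mod_cast hd
    nlinarith [key]
end

section
/- Let f, f̃ : ℝ^d → ℝ be convex and differentiable, let P be a convex compact set, let x̃* minimize f̃ over P and let x* minimize f over P. Suppose f has the quadratic growth property with parameter α > 0 over P (i.e., dist(x, X*)² ≤ (2/α)(f(x) − f*) for all x ∈ P, where X* is the set of minimizers of f) and ‖∇f(x) − ∇f̃(x)‖ ≤ ν for all x ∈ P. Then, letting x* be the point of X* closest to x̃*, it holds that ‖x̃* − x*‖ ≤ 2ν/α. -/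
open scoped RealInnerProductSpace

open Filter Topology

variable {E : Type*} [NormedAddCommGroup E] [InnerProductSpace ℝ E] [CompleteSpace E]

lemma dirDeriv {f : E → ℝ} {v x y : E} (hf : HasGradientAt f v x) :
    HasDerivAt (fun t : ℝ => f (x + t • (y - x))) ⟪v, y - x⟫ 0 := by
  have hγ : HasDerivAt (fun t : ℝ => x + t • (y - x)) (y - x) 0 := by
    simpa using ((hasDerivAt_id (0:ℝ)).smul_const (y - x)).const_add x
  have hf' : HasFDerivAt f ((InnerProductSpace.toDual ℝ E) v) (x + (0:ℝ) • (y - x)) := by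
    simpa using hf.hasFDerivAt
  simpa [Function.comp_def] using hf'.comp_hasDerivAt 0 hγ

lemma slope_lim {g : ℝ → ℝ} {L : ℝ} (hg : HasDerivAt g L 0)
    (h : ∀ t ∈ Set.Ioc (0:ℝ) 1, 0 ≤ g t - g 0) : 0 ≤ L := by
  have hs : Tendsto (slope g 0) (𝓝[>] 0) (𝓝 L) :=
    (hasDerivAt_iff_tendsto_slope.1 hg).mono_left
      (nhdsWithin_mono _ (by intro t ht; exact ne_of_gt ht))
  refine ge_of_tendsto hs ?_
  filter_upwards [Ioc_mem_nhdsGT_of_mem (Set.mem_Ico.2 ⟨le_refl 0, one_pos⟩)] with t ht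
  have := h t ht
  rw [slope_def_field, div_eq_mul_inv]
  have ht0 : (0:ℝ) < t := ht.1
  have : 0 ≤ (t - 0)⁻¹ := inv_nonneg.2 (by linarith [ht.1])
  nlinarith

lemma comb_mem {P : Set E} (hP : Convex ℝ P) {x y : E} (hx : x ∈ P) (hy : y ∈ P)
    {t : ℝ} (ht : t ∈ Set.Icc (0:ℝ) 1) : x + t • (y - x) ∈ P := by
  have := hP hx hy (by linarith [ht.2] : (0:ℝ) ≤ 1 - t) ht.1 (by ring)
  convert this using 1
  module

lemma var_ineq {P : Set E} (hP : Convex ℝ P) {f : E → ℝ} {v x y : E}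
    (hx : x ∈ P) (hy : y ∈ P) (hmin : ∀ z ∈ P, f x ≤ f z)
    (hf : HasGradientAt f v x) : 0 ≤ ⟪v, y - x⟫ := by
  refine slope_lim (dirDeriv hf) fun t ht => ?_
  have hm := hmin _ (comb_mem hP hx hy ⟨ht.1.le, ht.2⟩)
  simp only [zero_smul, add_zero]
  linarith

lemma grad_ineq {P : Set E} {f : E → ℝ} {v x y : E}
    (hconv : ConvexOn ℝ P f) (hx : x ∈ P) (hy : y ∈ P)
    (hf : HasGradientAt f v x) : ⟪v, y - x⟫ ≤ f y - f x := by
  have key : 0 ≤ (f y - f x) - ⟪v, y - x⟫ := by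
    refine slope_lim (g := fun t => t * (f y - f x) - (f (x + t • (y - x)) - f x)) ?_ ?_
    · have h1 : HasDerivAt (fun t : ℝ => t * (f y - f x)) (f y - f x) 0 := by
        simpa using (hasDerivAt_id (0:ℝ)).mul_const (f y - f x)
      exact h1.sub ((dirDeriv hf).sub_const (f x))
    · intro t ht
      have hc := hconv.2 hx hy (by linarith [ht.2] : (0:ℝ) ≤ 1 - t) ht.1.le (by ring)
      have he : x + t • (y - x) = (1 - t) • x + t • y := by module
      simp only [he, zero_smul, add_zero, smul_eq_mul, zero_mul] at hc ⊢
      nlinarith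
  linarith


/-- If `f, f̃` are convex and differentiable, `x̃*` minimizes `f̃`
over a convex compact `P`, `f` has quadratic growth with parameter `α > 0`
over `P`, and `‖∇f(x) − ∇f̃(x)‖ ≤ ν` on `P`, then the point `x*` of the set
`X*` of minimizers of `f` closest to `x̃*` satisfies `‖x̃* − x*‖ ≤ 2ν/α`. -/
theorem stmt3 {d : ℕ}
    (P : Set (EuclideanSpace ℝ (Fin d)))
    (hPconv : Convex ℝ P) (hPcomp : IsCompact P)
    (f ftil : EuclideanSpace ℝ (Fin d) → ℝ)
    (gf gftil : EuclideanSpace ℝ (Fin d) → EuclideanSpace ℝ (Fin d))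
    (hf : ∀ x, HasGradientAt f (gf x) x)
    (hftil : ∀ x, HasGradientAt ftil (gftil x) x)
    (hfconv : ConvexOn ℝ P f) (hftilconv : ConvexOn ℝ P ftil)
    (α ν : ℝ) (hα : 0 < α) (hν : 0 ≤ ν)
    (Xs : Set (EuclideanSpace ℝ (Fin d)))
    (hXs : Xs = {y ∈ P | ∀ z ∈ P, f y ≤ f z})
    (fstar : ℝ) (hfstar : ∀ y ∈ Xs, f y = fstar)
    (hQG : ∀ x ∈ P, (Metric.infDist x Xs) ^ 2 ≤ (2 / α) * (f x - fstar))
    (hgrad : ∀ x ∈ P, ‖gf x - gftil x‖ ≤ ν)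
    (xtil : EuclideanSpace ℝ (Fin d))
    (hxtil : xtil ∈ P ∧ ∀ y ∈ P, ftil xtil ≤ ftil y)
    (xs : EuclideanSpace ℝ (Fin d))
    (hxs : xs ∈ Xs ∧ ∀ y ∈ Xs, ‖xtil - xs‖ ≤ ‖xtil - y‖) :
    ‖xtil - xs‖ ≤ 2 * ν / α := by
  set D := ‖xtil - xs‖ with hD
  have hxsP : xs ∈ P := by rw [hXs] at hxs; exact hxs.1.1
  have hxsmin : ∀ z ∈ P, f xs ≤ f z := by rw [hXs] at hxs; exact hxs.1.2
  -- infDist xtil Xs = D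
  have hID : Metric.infDist xtil Xs = D := by
    apply le_antisymm
    · simpa [dist_eq_norm] using Metric.infDist_le_dist_of_mem hxs.1
    · by_contra hlt
      push_neg at hlt
      obtain ⟨y, hy, hdy⟩ := (Metric.infDist_lt_iff ⟨xs, hxs.1⟩).1 hlt
      have := hxs.2 y hy
      rw [dist_eq_norm] at hdy
      linarith
  -- quadratic growth at xtil
  have hQ := hQG xtil hxtil.1
  rw [hID] at hQ
  have hfxs : f xs = fstar := hfstar xs hxs.1
  -- gradient inequality for f at xtil towards xs
  have h1 : ⟪gf xtil, xs - xtil⟫ ≤ f xs - f xtil :=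
    grad_ineq hfconv hxtil.1 hxsP (hf xtil)
  -- variational inequality for ftil at xtil towards xs
  have h2 : 0 ≤ ⟪gftil xtil, xs - xtil⟫ :=
    var_ineq hPconv hxtil.1 hxsP hxtil.2 (hftil xtil)
  -- Cauchy–Schwarz
  have h3 : ⟪gf xtil - gftil xtil, xtil - xs⟫ ≤ ν * D := by
    calc ⟪gf xtil - gftil xtil, xtil - xs⟫ ≤ ‖gf xtil - gftil xtil‖ * ‖xtil - xs‖ :=
          real_inner_le_norm _ _
      _ ≤ ν * D := by
          apply mul_le_mul_of_nonneg_right (hgrad xtil hxtil.1) (norm_nonneg _)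
  have hsplit : ⟪gf xtil, xtil - xs⟫ =
      ⟪gf xtil - gftil xtil, xtil - xs⟫ + ⟪gftil xtil, xtil - xs⟫ := by
    rw [inner_sub_left]; ring
  have h2' : ⟪gftil xtil, xtil - xs⟫ ≤ 0 := by
    have : ⟪gftil xtil, xtil - xs⟫ = -⟪gftil xtil, xs - xtil⟫ := by
      rw [← inner_neg_right]; congr 1; abel
    linarith [h2, this.le, this.ge]
  have h1' : f xtil - f xs ≤ ⟪gf xtil, xtil - xs⟫ := by
    have : ⟪gf xtil, xtil - xs⟫ = -⟪gf xtil, xs - xtil⟫ := by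
      rw [← inner_neg_right]; congr 1; abel
    linarith
  -- combine : D^2 ≤ (2/α) * (ν * D)
  have hkey : D ^ 2 ≤ (2 / α) * (ν * D) := by
    have : f xtil - fstar ≤ ν * D := by rw [← hfxs]; linarith
    calc D ^ 2 ≤ (2 / α) * (f xtil - fstar) := hQ
      _ ≤ (2 / α) * (ν * D) := by
          apply mul_le_mul_of_nonneg_left this (by positivity)
  have hk2 : α * D ^ 2 ≤ 2 * (ν * D) := by
    have h := mul_le_mul_of_nonneg_left hkey hα.le
    calc α * D ^ 2 ≤ α * (2 / α * (ν * D)) := h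
      _ = 2 * (ν * D) := by field_simp
  rw [le_div_iff₀ hα]
  rcases eq_or_lt_of_le (norm_nonneg (xtil - xs)) with h0 | h0
  · have hD0 : D = 0 := h0.symm
    rw [hD0]; nlinarith
  · nlinarith
end

section
/- Let f be β-smooth and convex on a convex compact polytope P with vertex set V, and suppose the unique minimizer x* of f is a vertex with strict complementarity parameter δ > 0 (i.e., (v − x*)ᵀ∇f(x*) ≥ δ for all vertices v ≠ x*). If the standard Frank-Wolfe method with exact line-search attains f(x_T) − f* < δ at some iteration T, then x_T is not in the convex hull of V \ {x*}; combined with the O(βD²/t) convergence rate of Frank-Wolfe, the method reaches an iterate equal to x* (as a convex combination forced to put positive weight on x*) within O(βD²/δ) iterations. -/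
open scoped RealInnerProductSpace
open Filter Set Topology

lemma grad_ineq_s6 {d : ℕ} {P : Set (EuclideanSpace ℝ (Fin d))}
    {f : EuclideanSpace ℝ (Fin d) → ℝ} {gs xs y : EuclideanSpace ℝ (Fin d)}
    (hf : HasGradientAt f gs xs) (hfconv : ConvexOn ℝ P f)
    (hxs : xs ∈ P) (hy : y ∈ P) :
    ⟪gs, y - xs⟫ ≤ f y - f xs := by
  set φ : ℝ → ℝ := fun t => f (xs + t • (y - xs)) with hφ
  have hline : HasDerivAt (fun t : ℝ => xs + t • (y - xs)) (y - xs) 0 := by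
    simpa using ((hasDerivAt_id (0:ℝ)).smul_const (y - xs)).const_add xs
  have hd : HasDerivAt φ ⟪gs, y - xs⟫ 0 := by
    have h0 : HasFDerivAt f (InnerProductSpace.toDual ℝ _ gs) (xs + (0:ℝ) • (y - xs)) := by
      simpa using hf.hasFDerivAt
    have := h0.comp_hasDerivAt 0 hline
    simpa [φ, real_inner_comm, Function.comp_def] using this
  have hslope : Tendsto (fun t : ℝ => (φ t - φ 0) / t) (𝓝[>] (0:ℝ)) (𝓝 ⟪gs, y - xs⟫) := by
    have := (hd.hasDerivWithinAt (s := Set.Ioi (0:ℝ)))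
    have h2 := hasDerivWithinAt_iff_tendsto_slope.mp this
    have : Tendsto (slope φ 0) (𝓝[>] (0:ℝ)) (𝓝 ⟪gs, y - xs⟫) := by
      refine h2.mono_left (nhdsWithin_mono _ ?_)
      intro t ht; exact ⟨ht, ne_of_gt ht⟩
    refine this.congr' ?_
    filter_upwards [self_mem_nhdsWithin] with t ht
    simp [slope, sub_zero, div_eq_inv_mul]
  have hbound : ∀ᶠ t in 𝓝[>] (0:ℝ), (φ t - φ 0) / t ≤ f y - f xs := by
    filter_upwards [Ioo_mem_nhdsGT_of_mem (by norm_num : (0:ℝ) ∈ Ico 0 1)] with t ht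
    obtain ⟨ht0, ht1⟩ := ht
    have hconv := hfconv.2 hxs hy (by linarith : (0:ℝ) ≤ 1 - t) (le_of_lt ht0) (by ring)
    have hpt : (1 - t) • xs + t • y = xs + t • (y - xs) := by
      module
    rw [hpt] at hconv
    have : φ t - φ 0 ≤ t * (f y - f xs) := by
      simp only [φ, zero_smul, add_zero, smul_eq_mul] at hconv ⊢
      nlinarith
    rw [div_le_iff₀ ht0]
    linarith
  exact le_of_tendsto hslope hbound

/-- For `f` `β`-smooth and convex on a polytope `P = conv(V)` of
diameter `D`, whose unique minimizer `x*` is a vertex with strict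
complementarity parameter `δ > 0`: any point (in particular any Frank-Wolfe
iterate) `x ∈ P` with `f x − f* < δ` is not in `conv(V \ {x*})`; combined with
a Frank-Wolfe convergence rate `f(x_t) − f* ≤ CβD²/t`, every iterate `x_t`
with `t ≥ 1` and `CβD²/t < δ` (i.e. after `O(βD²/δ)` iterations) lies outside
`conv(V \ {x*})`, hence its convex decomposition puts positive weight on `x*`. -/
theorem stmt6 {d : ℕ}
    (V : Set (EuclideanSpace ℝ (Fin d))) (hVfin : V.Finite)
    (P : Set (EuclideanSpace ℝ (Fin d))) (hP : P = convexHull ℝ V)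
    (f : EuclideanSpace ℝ (Fin d) → ℝ)
    (g : EuclideanSpace ℝ (Fin d) → EuclideanSpace ℝ (Fin d))
    (hf : ∀ x, HasGradientAt f (g x) x)
    (hfconv : ConvexOn ℝ P f)
    (β D : ℝ) (hβ : 0 < β) (hD : 0 < D)
    (hsmooth : ∀ x y, ‖g x - g y‖ ≤ β * ‖x - y‖)
    (hdiam : ∀ x ∈ P, ∀ y ∈ P, ‖x - y‖ ≤ D)
    (xs : EuclideanSpace ℝ (Fin d)) (hxsV : xs ∈ V)
    (hxsmin : ∀ y ∈ P, f xs ≤ f y)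
    (hxsunique : ∀ y ∈ P, (∀ z ∈ P, f y ≤ f z) → y = xs)
    (δ : ℝ) (hδ : 0 < δ)
    (hstrict : ∀ v ∈ V, v ≠ xs → δ ≤ ⟪g xs, v - xs⟫)
    (x : ℕ → EuclideanSpace ℝ (Fin d)) (hxP : ∀ t, x t ∈ P)
    (C : ℝ) (hC : 0 < C)
    (hrate : ∀ t : ℕ, 1 ≤ t → f (x t) - f xs ≤ C * β * D ^ 2 / t) :
    (∀ y ∈ P, f y - f xs < δ → y ∉ convexHull ℝ (V \ {xs})) ∧
      (∀ t : ℕ, 1 ≤ t → C * β * D ^ 2 / t < δ →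
        x t ∉ convexHull ℝ (V \ {xs})) := by
  have hxsP : xs ∈ P := hP ▸ subset_convexHull ℝ V hxsV
  have key : ∀ y ∈ P, f y - f xs < δ → y ∉ convexHull ℝ (V \ {xs}) := by
    intro y hyP hlt hmem
    have hhalf : convexHull ℝ (V \ {xs}) ⊆ {w | δ ≤ ⟪g xs, w - xs⟫} := by
      apply convexHull_min
      · intro v hv
        exact hstrict v hv.1 hv.2
      · have hlin : IsLinearMap ℝ (fun w : EuclideanSpace ℝ (Fin d) => ⟪g xs, w⟫) :=
          ⟨fun a b => inner_add_right _ _ _, fun c a => real_inner_smul_right _ _ c⟩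
        have : Convex ℝ {w : EuclideanSpace ℝ (Fin d) | δ + ⟪g xs, xs⟫ ≤ ⟪g xs, w⟫} :=
          convex_halfSpace_ge hlin _
        rw [show {w : EuclideanSpace ℝ (Fin d) | δ ≤ ⟪g xs, w - xs⟫} = {w | δ + ⟪g xs, xs⟫ ≤ ⟪g xs, w⟫} from ?_]
        · exact this
        ext w
        simp only [Set.mem_setOf_eq, inner_sub_right]
        constructor <;> intro h <;> linarith
    have h1 : δ ≤ ⟪g xs, y - xs⟫ := hhalf hmem
    have h2 := grad_ineq_s6 (hf xs) hfconv hxsP hyP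
    linarith
  refine ⟨key, fun t ht hlt => key (x t) (hxP t) (lt_of_le_of_lt (hrate t ht) hlt)⟩
end

section
/- Let f be convex and differentiable on a polytope P, let x ∈ P have convex decomposition x = ∑ᵢ λᵢvᵢ over vertices vᵢ with λᵢ > 0, and let x* be a minimizer of f over P. Write S₂ for the set of indices i with vᵢ ∉ F*, where F* is the optimal face. Under strict complementarity with parameter δ > 0 (i.e., (v − x*)ᵀ∇f(x*) ≥ δ for vertices v ∉ F* and = 0 for v ∈ F* ), it holds that ∑_{i∈S₂} λᵢ ≤ (f(x) − f*)/δ. -/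
open scoped RealInnerProductSpace Classical

/-- For `x = ∑ᵢ λᵢ vᵢ` a convex decomposition over vertices with
`λᵢ > 0`, a minimizer `x*` of a convex differentiable `f` over `P`, and the
optimal face `F*`, strict complementarity with parameter `δ > 0` implies that
the total mass on vertices outside `F*` satisfies
`∑_{i : vᵢ ∉ F*} λᵢ ≤ (f x − f*)/δ`. -/
theorem stmt7 {d n : ℕ}
    (V : Set (EuclideanSpace ℝ (Fin d))) (hVfin : V.Finite)
    (P : Set (EuclideanSpace ℝ (Fin d))) (hP : P = convexHull ℝ V)
    (f : EuclideanSpace ℝ (Fin d) → ℝ)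
    (g : EuclideanSpace ℝ (Fin d) → EuclideanSpace ℝ (Fin d))
    (hf : ∀ x, HasGradientAt f (g x) x)
    (hfconv : ConvexOn ℝ P f)
    (Fs : Set (EuclideanSpace ℝ (Fin d)))
    (xs : EuclideanSpace ℝ (Fin d)) (hxsP : xs ∈ P) (hxsFs : xs ∈ Fs)
    (hxsmin : ∀ y ∈ P, f xs ≤ f y)
    (δ : ℝ) (hδ : 0 < δ)
    (hstrict : ∀ v ∈ V,
      (v ∉ Fs → δ ≤ ⟪g xs, v - xs⟫) ∧ (v ∈ Fs → ⟪g xs, v - xs⟫ = 0))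
    (lam : Fin n → ℝ) (v : Fin n → EuclideanSpace ℝ (Fin d))
    (hlampos : ∀ i, 0 < lam i) (hlamsum : ∑ i, lam i = 1)
    (hvV : ∀ i, v i ∈ V)
    (x : EuclideanSpace ℝ (Fin d)) (hx : x = ∑ i, lam i • v i) :
    ∑ i, Set.indicator {j : Fin n | v j ∉ Fs} lam i
      ≤ (f x - f xs) / δ := by
  -- x ∈ P
  have hxP : x ∈ P := by
    rw [hP, hx]
    exact (convex_convexHull ℝ V).sum_mem (fun i _ => (hlampos i).le) hlamsum
      (fun i _ => subset_convexHull ℝ V (hvV i))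
  -- the path φ
  set φ : ℝ → ℝ := fun t => f (xs + t • (x - xs)) with hφ
  have hseg : ∀ t ∈ Set.Icc (0:ℝ) 1, xs + t • (x - xs) ∈ P := by
    intro t ht
    have heq : xs + t • (x - xs) = (1 - t) • xs + t • x := by module
    rw [heq, hP]
    exact (convex_convexHull ℝ V) (hP ▸ hxsP) (hP ▸ hxP)
      (by linarith [ht.2]) ht.1 (by ring)
  have hφconv : ConvexOn ℝ (Set.Icc (0:ℝ) 1) φ := by
    constructor
    · exact convex_Icc 0 1
    · intro a ha b hb wa wb hwa hwb hw
      have key : (wa • a + wb • b) • (x - xs) = wa • (a • (x - xs)) + wb • (b • (x - xs)) := by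
        simp [add_smul, smul_smul]
      simp only [hφ, smul_eq_mul]
      calc f (xs + (wa * a + wb * b) • (x - xs))
          = f (wa • (xs + a • (x - xs)) + wb • (xs + b • (x - xs))) := by
            congr 1
            have hwb' : wa = 1 - wb := by linarith
            rw [hwb']; module
        _ ≤ wa * f (xs + a • (x - xs)) + wb * f (xs + b • (x - xs)) :=
            hfconv.2 (hseg a ha) (hseg b hb) hwa hwb hw
  -- derivative of φ at 0
  have hline : HasDerivAt (fun t : ℝ => xs + t • (x - xs)) (x - xs) 0 := by
    simpa using ((hasDerivAt_id (0:ℝ)).smul_const (x - xs)).const_add xs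
  have hfd : HasFDerivAt f (InnerProductSpace.toDual ℝ _ (g xs)) xs := (hf xs).hasFDerivAt
  have hφderiv : HasDerivAt φ ⟪g xs, x - xs⟫ 0 := by
    have hfd0 : HasFDerivAt f (InnerProductSpace.toDual ℝ _ (g xs))
        (xs + (0:ℝ) • (x - xs)) := by simpa using hfd
    have := hfd0.comp_hasDerivAt 0 hline
    simp only [InnerProductSpace.toDual_apply_apply] at this
    exact this
  -- slope bound
  have hslope : ⟪g xs, x - xs⟫ ≤ f x - f xs := by
    have := hφconv.le_slope_of_hasDerivAt (Set.left_mem_Icc.2 zero_le_one)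
      (Set.right_mem_Icc.2 zero_le_one) zero_lt_one hφderiv
    simpa [slope, hφ] using this
  -- inner product decomposition
  have hdecomp : ⟪g xs, x - xs⟫ = ∑ i, lam i * ⟪g xs, v i - xs⟫ := by
    have hxxs : x - xs = ∑ i, lam i • (v i - xs) := by
      rw [hx]
      simp only [smul_sub, Finset.sum_sub_distrib, ← Finset.sum_smul, hlamsum, one_smul]
    rw [hxxs, inner_sum]
    exact Finset.sum_congr rfl fun i _ => real_inner_smul_right _ _ _
  -- lower bound
  have hlow : δ * ∑ i, Set.indicator {j : Fin n | v j ∉ Fs} lam i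
      ≤ ∑ i, lam i * ⟪g xs, v i - xs⟫ := by
    rw [Finset.mul_sum]
    refine Finset.sum_le_sum fun i _ => ?_
    by_cases hi : v i ∈ Fs
    · rw [Set.indicator_of_notMem (by simpa using hi), ((hstrict (v i) (hvV i)).2 hi)]
      simp
    · rw [Set.indicator_of_mem (by simpa using hi)]
      rw [mul_comm]
      exact mul_le_mul_of_nonneg_left ((hstrict (v i) (hvV i)).1 hi) (hlampos i).le
  rw [le_div_iff₀ hδ, mul_comm]
  calc δ * ∑ i, Set.indicator {j : Fin n | v j ∉ Fs} lam i
      ≤ ∑ i, lam i * ⟪g xs, v i - xs⟫ := hlow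
    _ = ⟪g xs, x - xs⟫ := hdecomp.symm
    _ ≤ f x - f xs := hslope
end

section
/- Suppose a sequence (h_t) of nonnegative reals satisfies: h_{t+1} ≤ h_t for all t, and h_{t+1} ≤ (1 − γ) h_t whenever iteration t is not a 'drop step', where γ ∈ (0,1); and among iterations T₀, T₀+1, …, t−1 at most (k + (t − T₀))/2 are drop steps, where k ≤ T₀. Then for all t ≥ 2T₀: h_t ≤ h_{T₀} (1 − γ)^{(t − 2T₀)/2} ≤ h_{T₀} exp(−γ(t − 2T₀)/2). -/
open scoped Classical

/-- Drop-step counting. If a nonnegative nonincreasing sequence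
`(h_t)` contracts by `(1 − γ)` on every non-drop step, and among iterations
`T₀, …, t−1` at most `(k + (t − T₀))/2` are drop steps with `k ≤ T₀`, then for
all `t ≥ 2T₀`: `h_t ≤ h_{T₀}(1 − γ)^{(t−2T₀)/2} ≤ h_{T₀} exp(−γ(t−2T₀)/2)`. -/
theorem stmt11 (h : ℕ → ℝ) (hpos : ∀ t, 0 ≤ h t)
    (γ : ℝ) (hγ : 0 < γ) (hγ1 : γ < 1)
    (drop : Set ℕ)
    (hmono : ∀ t, h (t + 1) ≤ h t)
    (hcontract : ∀ t, t ∉ drop → h (t + 1) ≤ (1 - γ) * h t)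
    (T₀ k : ℕ) (hk : k ≤ T₀)
    (hcount : ∀ t, T₀ ≤ t →
      (((Finset.Ico T₀ t).filter (fun s => s ∈ drop)).card : ℝ)
        ≤ ((k : ℝ) + ((t : ℝ) - (T₀ : ℝ))) / 2) :
    ∀ t, 2 * T₀ ≤ t →
      h t ≤ h T₀ * (1 - γ) ^ (((t : ℝ) - 2 * (T₀ : ℝ)) / 2) ∧
      h t ≤ h T₀ * Real.exp (-γ * ((t : ℝ) - 2 * (T₀ : ℝ)) / 2) := by
  have hb0 : (0:ℝ) < 1 - γ := by linarith
  have hb1 : (1:ℝ) - γ ≤ 1 := by linarith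
  -- main induction: h t ≤ h T₀ * (1-γ)^(# non-drop steps in [T₀, t))
  have key : ∀ t, T₀ ≤ t →
      h t ≤ h T₀ * (1 - γ) ^ (((Finset.Ico T₀ t).filter (fun s => s ∉ drop)).card) := by
    intro t ht
    induction t with
    | zero =>
        have : T₀ = 0 := Nat.le_zero.mp ht
        subst this; simp
    | succ n ih =>
        rcases Nat.lt_or_ge T₀ (n+1) with hlt | hge
        · have hTn : T₀ ≤ n := Nat.lt_succ_iff.mp hlt
          have ihn := ih hTn
          have hIco : Finset.Ico T₀ (n+1) = insert n (Finset.Ico T₀ n) := by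
            ext x; simp only [Finset.mem_Ico, Finset.mem_insert]; omega
          by_cases hd : n ∈ drop
          · have hcard : ((Finset.Ico T₀ (n+1)).filter (fun s => s ∉ drop)).card
                = ((Finset.Ico T₀ n).filter (fun s => s ∉ drop)).card := by
              rw [hIco, Finset.filter_insert]
              simp [hd]
            rw [hcard]
            exact le_trans (hmono n) ihn
          · have hcard : ((Finset.Ico T₀ (n+1)).filter (fun s => s ∉ drop)).card
                = ((Finset.Ico T₀ n).filter (fun s => s ∉ drop)).card + 1 := by
              rw [hIco, Finset.filter_insert]
              simp only [hd, not_false_iff, if_true]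
              rw [Finset.card_insert_of_notMem (by simp)]
            rw [hcard, pow_succ]
            calc h (n+1) ≤ (1 - γ) * h n := hcontract n hd
              _ ≤ (1 - γ) * (h T₀ * (1 - γ) ^ (((Finset.Ico T₀ n).filter (fun s => s ∉ drop)).card)) :=
                  mul_le_mul_of_nonneg_left ihn (le_of_lt hb0)
              _ = h T₀ * ((1 - γ) ^ (((Finset.Ico T₀ n).filter (fun s => s ∉ drop)).card) * (1 - γ)) := by ring
        · have : T₀ = n+1 := le_antisymm ht hge
          subst this; simp
  intro t ht
  have hT0t : T₀ ≤ t := le_trans (by omega) ht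
  set N := ((Finset.Ico T₀ t).filter (fun s => s ∉ drop)).card with hN
  set D := ((Finset.Ico T₀ t).filter (fun s => s ∈ drop)).card with hD
  have hsum : D + N = t - T₀ := by
    rw [hD, hN]
    rw [Finset.card_filter_add_card_filter_not (p := fun s => s ∈ drop)]
    exact Nat.card_Ico T₀ t
  have hDle := hcount t hT0t
  have hNreal : ((t:ℝ) - 2*(T₀:ℝ)) / 2 ≤ (N:ℝ) := by
    have : ((D:ℝ)) + (N:ℝ) = (t:ℝ) - (T₀:ℝ) := by
      have := hsum
      push_cast [Nat.cast_sub hT0t] at *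
      exact_mod_cast by
        have h2 : ((D + N : ℕ) : ℝ) = ((t - T₀ : ℕ) : ℝ) := by exact_mod_cast congrArg (Nat.cast : ℕ → ℝ) hsum
        rw [Nat.cast_add, Nat.cast_sub hT0t] at h2
        linarith [h2]
    have hk' : (k:ℝ) ≤ (T₀:ℝ) := by exact_mod_cast hk
    linarith
  have h1 : h t ≤ h T₀ * (1 - γ) ^ (((t : ℝ) - 2 * (T₀ : ℝ)) / 2) := by
    calc h t ≤ h T₀ * (1 - γ) ^ N := key t hT0t
      _ = h T₀ * (1 - γ) ^ ((N:ℝ)) := by rw [Real.rpow_natCast]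
      _ ≤ h T₀ * (1 - γ) ^ (((t : ℝ) - 2 * (T₀ : ℝ)) / 2) := by
          apply mul_le_mul_of_nonneg_left _ (hpos T₀)
          exact Real.rpow_le_rpow_of_exponent_ge hb0 hb1 hNreal
  refine ⟨h1, le_trans h1 ?_⟩
  apply mul_le_mul_of_nonneg_left _ (hpos T₀)
  have hx : (0:ℝ) ≤ ((t : ℝ) - 2 * (T₀ : ℝ)) / 2 := by
    have : (2 * T₀ : ℝ) ≤ (t:ℝ) := by exact_mod_cast ht
    linarith
  rw [Real.rpow_def_of_pos hb0, Real.exp_le_exp]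
  have hlog : Real.log (1 - γ) ≤ -γ := by
    have := Real.log_le_sub_one_of_pos hb0
    linarith
  calc Real.log (1 - γ) * (((t : ℝ) - 2 * (T₀ : ℝ)) / 2)
      ≤ -γ * (((t : ℝ) - 2 * (T₀ : ℝ)) / 2) := mul_le_mul_of_nonneg_right hlog hx
    _ = -γ * ((t : ℝ) - 2 * (T₀ : ℝ)) / 2 := by ring
end

section
/- Let f be convex and differentiable on a polytope P, let x ∈ P with convex decomposition x = ∑_{i=1}^n λᵢvᵢ (λᵢ > 0, vertices vᵢ), let u ∈ argmin_{v ∈ V} vᵀ∇f(x) and z ∈ argmax_{i∈[n]} vᵢᵀ∇f(x). For any choice of Δᵢ ∈ [0, λᵢ] with total mass Δ = ∑ᵢ Δᵢ, the point p = ∑ᵢ(λᵢ − Δᵢ)vᵢ + Δu satisfies (p − x)ᵀ∇f(x) = ∑ᵢ Δᵢ(u − vᵢ)ᵀ∇f(x) ≥ Δ·(u − x)ᵀ∇f(x) + Δ·(x − z)ᵀ∇f(x). -/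
open scoped RealInnerProductSpace

/-- For `x = ∑ᵢ λᵢvᵢ` (λᵢ > 0, vertices vᵢ), `u` a linear
minimizer over `V` and `z = v_{i₀}` a maximizer of `⟪vᵢ, ∇f(x)⟫` over the
support, and any `Δᵢ ∈ [0, λᵢ]` with `Δ = ∑ᵢ Δᵢ`, the point
`p = ∑ᵢ(λᵢ − Δᵢ)vᵢ + Δu` satisfies
`⟪∇f(x), p − x⟫ = ∑ᵢ Δᵢ⟪∇f(x), u − vᵢ⟫ ≥ Δ⟪∇f(x), u − x⟫ + Δ⟪∇f(x), x − z⟫`. -/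
theorem stmt13 {d n : ℕ}
    (V : Set (EuclideanSpace ℝ (Fin d))) (hVfin : V.Finite)
    (f : EuclideanSpace ℝ (Fin d) → ℝ)
    (g : EuclideanSpace ℝ (Fin d) → EuclideanSpace ℝ (Fin d))
    (hf : ∀ x, HasGradientAt f (g x) x)
    (lam : Fin n → ℝ) (v : Fin n → EuclideanSpace ℝ (Fin d))
    (hlampos : ∀ i, 0 < lam i) (hlamsum : ∑ i, lam i = 1)
    (hvV : ∀ i, v i ∈ V)
    (x : EuclideanSpace ℝ (Fin d)) (hx : x = ∑ i, lam i • v i)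
    (u : EuclideanSpace ℝ (Fin d)) (huV : u ∈ V)
    (hu : ∀ w ∈ V, ⟪g x, u⟫ ≤ ⟪g x, w⟫)
    (i₀ : Fin n) (z : EuclideanSpace ℝ (Fin d)) (hz : z = v i₀)
    (hzmax : ∀ i, ⟪g x, v i⟫ ≤ ⟪g x, z⟫)
    (Δi : Fin n → ℝ) (hΔi : ∀ i, Δi i ∈ Set.Icc 0 (lam i))
    (Δ : ℝ) (hΔ : Δ = ∑ i, Δi i)
    (p : EuclideanSpace ℝ (Fin d))
    (hp : p = (∑ i, (lam i - Δi i) • v i) + Δ • u) :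
    ⟪g x, p - x⟫ = ∑ i, Δi i * ⟪g x, u - v i⟫ ∧
      Δ * ⟪g x, u - x⟫ + Δ * ⟪g x, x - z⟫ ≤ ⟪g x, p - x⟫ := by
  have hpx : p - x = ∑ i, Δi i • (u - v i) := by
    subst hp hx hΔ
    simp only [smul_sub, sub_smul, Finset.sum_sub_distrib, Finset.sum_smul]
    abel
  have heq : ⟪g x, p - x⟫ = ∑ i, Δi i * ⟪g x, u - v i⟫ := by
    rw [hpx, inner_sum]
    simp only [real_inner_smul_right]
  refine ⟨heq, ?_⟩
  have hRHS : Δ * ⟪g x, u - x⟫ + Δ * ⟪g x, x - z⟫ = ∑ i, Δi i * ⟪g x, u - z⟫ := by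
    rw [hΔ, ← mul_add, ← inner_add_right, Finset.sum_mul]
    congr 1
    abel
  rw [heq, hRHS]
  refine Finset.sum_le_sum fun i _ => ?_
  have h1 : ⟪g x, u - z⟫ ≤ ⟪g x, u - v i⟫ := by
    rw [inner_sub_right, inner_sub_right]
    linarith [hzmax i]
  exact mul_le_mul_of_nonneg_left h1 (hΔi i).1
end

section
/- Let g : ℝ^m → ℝ be α_g-strongly convex, A ∈ ℝ^{m×d}, b ∈ ℝ^d, and define f(x) = g(Ax) + bᵀx on a convex compact polytope P ⊆ ℝ^d. Then the set of minimizers X* of f over P satisfies: Ax is constant on X* and bᵀx is constant on X* (i.e., any two minimizers x₁*, x₂* satisfy Ax₁* = Ax₂* and bᵀx₁* = bᵀx₂*). -/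
open scoped RealInnerProductSpace

/-- Midpoint strong convexity inequality from the gradient inequality. -/
lemma midpoint_strong {m : ℕ}
    (g : EuclideanSpace ℝ (Fin m) → ℝ)
    (gg : EuclideanSpace ℝ (Fin m) → EuclideanSpace ℝ (Fin m))
    (αg : ℝ)
    (hstrong : ∀ x y : EuclideanSpace ℝ (Fin m),
      g x + ⟪gg x, y - x⟫ + αg / 2 * ‖y - x‖ ^ 2 ≤ g y)
    (u v : EuclideanSpace ℝ (Fin m)) :
    2 * g ((1/2 : ℝ) • u + (1/2 : ℝ) • v) + αg / 4 * ‖u - v‖ ^ 2 ≤ g u + g v := by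
  set w := (1/2 : ℝ) • u + (1/2 : ℝ) • v with hw
  have h1 := hstrong w u
  have h2 := hstrong w v
  have hwu : u - w = (1/2 : ℝ) • (u - v) := by
    simp [hw, smul_sub]; module
  have hwv : v - w = -((1/2 : ℝ) • (u - v)) := by
    simp [hw, smul_sub]; module
  have hsum : ⟪gg w, u - w⟫ + ⟪gg w, v - w⟫ = 0 := by
    rw [hwu, hwv, inner_neg_right]; ring
  have hnu : ‖u - w‖ ^ 2 = (1/4 : ℝ) * ‖u - v‖ ^ 2 := by
    rw [hwu, norm_smul]; simp; ring
  have hnv : ‖v - w‖ ^ 2 = (1/4 : ℝ) * ‖u - v‖ ^ 2 := by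
    rw [hwv, norm_neg, norm_smul]; simp; ring
  rw [hnu] at h1
  rw [hnv] at h2
  nlinarith [h1, h2, hsum]

/-- For `g : ℝ^m → ℝ` `α_g`-strongly convex (in the gradient
sense), `A` linear, `b ∈ ℝ^d`, and `f x = g(Ax) + bᵀx` on a convex compact
polytope `P`: any two minimizers `x₁*, x₂*` of `f` over `P` satisfy
`Ax₁* = Ax₂*` and `bᵀx₁* = bᵀx₂*`. -/
theorem stmt18 {d m : ℕ}
    (P : Set (EuclideanSpace ℝ (Fin d)))
    (hPconv : Convex ℝ P) (hPcomp : IsCompact P)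
    (g : EuclideanSpace ℝ (Fin m) → ℝ)
    (gg : EuclideanSpace ℝ (Fin m) → EuclideanSpace ℝ (Fin m))
    (hg : ∀ x, HasGradientAt g (gg x) x)
    (αg : ℝ) (hαg : 0 < αg)
    (hstrong : ∀ x y : EuclideanSpace ℝ (Fin m),
      g x + ⟪gg x, y - x⟫ + αg / 2 * ‖y - x‖ ^ 2 ≤ g y)
    (A : EuclideanSpace ℝ (Fin d) →L[ℝ] EuclideanSpace ℝ (Fin m))
    (b : EuclideanSpace ℝ (Fin d))
    (f : EuclideanSpace ℝ (Fin d) → ℝ)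
    (hf : ∀ x, f x = g (A x) + ⟪b, x⟫) :
    ∀ x₁ ∈ P, ∀ x₂ ∈ P,
      (∀ y ∈ P, f x₁ ≤ f y) → (∀ y ∈ P, f x₂ ≤ f y) →
      A x₁ = A x₂ ∧ ⟪b, x₁⟫ = ⟪b, x₂⟫ := by
  intro x₁ hx₁ x₂ hx₂ hmin₁ hmin₂
  set z := (1/2 : ℝ) • x₁ + (1/2 : ℝ) • x₂ with hz
  have hzP : z ∈ P := hPconv hx₁ hx₂ (by norm_num) (by norm_num) (by norm_num)
  have hAz : A z = (1/2 : ℝ) • A x₁ + (1/2 : ℝ) • A x₂ := by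
    simp [hz, map_add, map_smul]
  have hbz : ⟪b, z⟫ = (1/2 : ℝ) * ⟪b, x₁⟫ + (1/2 : ℝ) * ⟪b, x₂⟫ := by
    simp [hz, inner_add_right, inner_smul_right]
  have hmid := midpoint_strong g gg αg hstrong (A x₁) (A x₂)
  have h1 : f x₁ ≤ f z := hmin₁ z hzP
  have h2 : f x₂ ≤ f z := hmin₂ z hzP
  rw [hf, hf, hAz] at h1 h2
  rw [hbz] at h1 h2
  have hnorm : ‖A x₁ - A x₂‖ ^ 2 = 0 := by nlinarith [sq_nonneg ‖A x₁ - A x₂‖]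
  have hA : A x₁ = A x₂ := by
    have := pow_eq_zero_iff (n := 2) (by norm_num) |>.mp hnorm
    rw [norm_eq_zero, sub_eq_zero] at this
    exact this
  refine ⟨hA, ?_⟩
  have e1 : f x₁ ≤ f x₂ := hmin₁ x₂ hx₂
  have e2 : f x₂ ≤ f x₁ := hmin₂ x₁ hx₁
  have : f x₁ = f x₂ := le_antisymm e1 e2
  rw [hf, hf, hA] at this
  linarith
end
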